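/- Let A (n×n), B (n×m), C (p×n), K̄, K̲ (m×n), L̄, L̲ (n×p), E (n×q) with E ≥ 0 entrywise, and F (p×r) be real matrices satisfying: A + B(K̄ + K̲), A − L̄C, and A − L̲C are Schur stable; A + B(K̄ + K̲) ≥ 0, A + BK̄ ≥ 0, BK̄ ≥ 0, A − L̄C ≥ 0, A − L̲C ≥ 0, BK̄ + L̲C ≥ 0; and L̄F𝟙 − E𝟙 ≥ 0, E𝟙 − L̲F𝟙 ≥ 0, L̲F𝟙 ≥ 0. Let G = [[A + B(K̄ + K̲), BK̄, −BK̲], [0, A − L̄C, 0], [0, 0, A − L̲C]], d = (E𝟙, L̄F𝟙 − E𝟙, E𝟙 − L̲F𝟙), and f(z) = Gz + d. Then the set X_e = {(x, ē, e̲) ∈ ℝ^{3n} : x ≥ 0, ē ≥ 0, 0 ≤ e̲ ≤ x} is invariant under f, and there exists X* ∈ X_e such that for every z₀ ∈ X_e the iterates f^t(z₀) converge to X*. -/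

import Mathlib

open Matrix Filter
open scoped NNReal ENNReal

/-- A real square matrix is Schur stable if its spectral radius (computed over ℂ) is
strictly less than one. -/
def IsSchur {ι : Type*} [Fintype ι] [DecidableEq ι] (M : Matrix ι ι ℝ) : Prop :=
  spectralRadius ℂ (M.map (algebraMap ℝ ℂ)) < 1

/-- The error-coordinate closed-loop map `(x, ē, e̲) ↦ G (x, ē, e̲)` with
`G = [[A + B(K̄ + K̲), BK̄, −BK̲], [0, A − L̄C, 0], [0, 0, A − L̲C]]`. -/
def Gmap {n m p : ℕ}
    (A : Matrix (Fin n) (Fin n) ℝ) (B : Matrix (Fin n) (Fin m) ℝ)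
    (C : Matrix (Fin p) (Fin n) ℝ)
    (Ku Kl : Matrix (Fin m) (Fin n) ℝ) (Lu Ll : Matrix (Fin n) (Fin p) ℝ)
    (z : (Fin n → ℝ) × (Fin n → ℝ) × (Fin n → ℝ)) :
    (Fin n → ℝ) × (Fin n → ℝ) × (Fin n → ℝ) :=
  ((A + B * (Ku + Kl)) *ᵥ z.1 + (B * Ku) *ᵥ z.2.1 - (B * Kl) *ᵥ z.2.2,
   (A - Lu * C) *ᵥ z.2.1,
   (A - Ll * C) *ᵥ z.2.2)

/-- The constant term `d = (E𝟙, L̄F𝟙 − E𝟙, E𝟙 − L̲F𝟙)` of the expected error dynamics. -/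
def noiseOffset {n p q r : ℕ}
    (Lu Ll : Matrix (Fin n) (Fin p) ℝ)
    (E : Matrix (Fin n) (Fin q) ℝ) (F : Matrix (Fin p) (Fin r) ℝ) :
    (Fin n → ℝ) × (Fin n → ℝ) × (Fin n → ℝ) :=
  (E *ᵥ (fun _ => (1 : ℝ)),
   (Lu * F) *ᵥ (fun _ => (1 : ℝ)) - E *ᵥ (fun _ => (1 : ℝ)),
   E *ᵥ (fun _ => (1 : ℝ)) - (Ll * F) *ᵥ (fun _ => (1 : ℝ)))

/-- The affine expected error dynamics `f(z) = Gz + d`. -/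
def noisyMap {n m p q r : ℕ}
    (A : Matrix (Fin n) (Fin n) ℝ) (B : Matrix (Fin n) (Fin m) ℝ)
    (C : Matrix (Fin p) (Fin n) ℝ)
    (Ku Kl : Matrix (Fin m) (Fin n) ℝ) (Lu Ll : Matrix (Fin n) (Fin p) ℝ)
    (E : Matrix (Fin n) (Fin q) ℝ) (F : Matrix (Fin p) (Fin r) ℝ)
    (z : (Fin n → ℝ) × (Fin n → ℝ) × (Fin n → ℝ)) :
    (Fin n → ℝ) × (Fin n → ℝ) × (Fin n → ℝ) :=
  Gmap A B C Ku Kl Lu Ll z + noiseOffset Lu Ll E F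

/-- The error cone `X_e = {(x, ē, e̲) : x ≥ 0, ē ≥ 0, 0 ≤ e̲ ≤ x entrywise}`. -/
def errorCone (n : ℕ) : Set ((Fin n → ℝ) × (Fin n → ℝ) × (Fin n → ℝ)) :=
  {z | (∀ i, 0 ≤ z.1 i) ∧ (∀ i, 0 ≤ z.2.1 i) ∧ (∀ i, 0 ≤ z.2.2 i) ∧
       (∀ i, z.2.2 i ≤ z.1 i)}


section PowBound
attribute [local instance] Matrix.linftyOpNormedRing Matrix.linftyOpNormedAlgebra

variable {n : ℕ}

lemma mulVec_map_complex (M : Matrix (Fin n) (Fin n) ℝ) (v : Fin n → ℝ) :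
    (M.map (algebraMap ℝ ℂ)) *ᵥ (fun i => (v i : ℂ)) = fun i => (((M *ᵥ v) i : ℝ) : ℂ) := by
  funext i
  simp [Matrix.mulVec, dotProduct, Matrix.map_apply]

lemma norm_complexify (v : Fin n → ℝ) : ‖(fun i => (v i : ℂ))‖ = ‖v‖ := by
  simp [Pi.norm_def, Pi.nnnorm_def]

lemma schur_pow_vec_bound (M : Matrix (Fin n) (Fin n) ℝ) (hM : IsSchur M) :
    ∃ c ρ : ℝ, 1 ≤ c ∧ 0 < ρ ∧ ρ < 1 ∧
      ∀ (k : ℕ) (v : Fin n → ℝ), ‖(M ^ k) *ᵥ v‖ ≤ c * ρ ^ k * ‖v‖ := by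
  haveI : CompleteSpace (Matrix (Fin n) (Fin n) ℂ) := FiniteDimensional.complete ℂ _
  set Mc : Matrix (Fin n) (Fin n) ℂ := M.map (algebraMap ℝ ℂ) with hMc
  obtain ⟨ρ', hρ1, hρ2⟩ := ENNReal.lt_iff_exists_nnreal_btwn.mp hM
  have hρ'0 : (0 : ℝ≥0) < ρ' := by
    have h0 : (0:ℝ≥0∞) < (ρ' : ℝ≥0∞) := lt_of_le_of_lt zero_le hρ1
    exact_mod_cast h0
  have hρlt1 : (ρ' : ℝ) < 1 := by exact_mod_cast hρ2
  have hg := spectrum.pow_nnnorm_pow_one_div_tendsto_nhds_spectralRadius Mc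
  have hev : ∀ᶠ (k : ℕ) in atTop, (‖Mc ^ k‖₊ : ℝ≥0∞) ^ (1 / (k : ℝ)) < (ρ' : ℝ≥0∞) :=
    hg.eventually_lt_const hρ1
  obtain ⟨N₀, hN₀⟩ := eventually_atTop.mp hev
  set N := max N₀ 1 with hN
  have hpow : ∀ k, N ≤ k → ‖Mc ^ k‖ ≤ (ρ' : ℝ) ^ k := by
    intro k hk
    have hk1 : 1 ≤ k := le_trans (le_max_right _ _) hk
    have h := hN₀ k (le_trans (le_max_left _ _) hk)
    have hkR : (0 : ℝ) < (k : ℝ) := by exact_mod_cast hk1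
    have h2 : ((‖Mc ^ k‖₊ : ℝ≥0∞) ^ (1 / (k:ℝ))) ^ (k : ℝ) < (ρ' : ℝ≥0∞) ^ (k : ℝ) :=
      ENNReal.rpow_lt_rpow h hkR
    rw [← ENNReal.rpow_mul, one_div, inv_mul_cancel₀ hkR.ne', ENNReal.rpow_one] at h2
    have h3 : (‖Mc ^ k‖₊ : ℝ≥0∞) < ((ρ' ^ (k:ℝ) : ℝ≥0) : ℝ≥0∞) := by
      rwa [← ENNReal.coe_rpow_of_ne_zero hρ'0.ne'] at h2
    have h4 : ‖Mc ^ k‖₊ < ρ' ^ (k : ℝ) := by exact_mod_cast h3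
    have h5 : (ρ' : ℝ≥0) ^ ((k:ℕ) : ℝ) = ρ' ^ k := NNReal.rpow_natCast _ _
    rw [h5] at h4
    calc ‖Mc ^ k‖ = ((‖Mc ^ k‖₊ : ℝ≥0) : ℝ) := rfl
    _ ≤ ((ρ' ^ k : ℝ≥0) : ℝ) := by exact_mod_cast h4.le
    _ = (ρ' : ℝ) ^ k := by push_cast; ring
  set ρ : ℝ := (ρ' : ℝ) with hρ
  have hρ0 : 0 < ρ := hρ'0
  set S : ℝ := ∑ j ∈ Finset.range N, ‖Mc ^ j‖ with hS
  have hS0 : 0 ≤ S := Finset.sum_nonneg fun _ _ => norm_nonneg _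
  set c : ℝ := max 1 (S / ρ ^ N) with hc
  refine ⟨c, ρ, le_max_left _ _, hρ0, hρlt1, ?_⟩
  have hmat : ∀ k, ‖Mc ^ k‖ ≤ c * ρ ^ k := by
    intro k
    rcases le_or_gt N k with h | h
    · calc ‖Mc ^ k‖ ≤ ρ ^ k := hpow k h
      _ = 1 * ρ ^ k := (one_mul _).symm
      _ ≤ c * ρ ^ k := by
          apply mul_le_mul_of_nonneg_right (le_max_left _ _) (by positivity)
    · have h1 : ‖Mc ^ k‖ ≤ S :=
        Finset.single_le_sum (f := fun j => ‖Mc ^ j‖) (fun _ _ => norm_nonneg _)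
          (Finset.mem_range.mpr h)
      have h2 : ρ ^ N ≤ ρ ^ k := pow_le_pow_of_le_one hρ0.le hρlt1.le h.le
      calc ‖Mc ^ k‖ ≤ S := h1
      _ = S / ρ ^ N * ρ ^ N := by field_simp
      _ ≤ S / ρ ^ N * ρ ^ k := by
          apply mul_le_mul_of_nonneg_left h2 (by positivity)
      _ ≤ c * ρ ^ k := by
          apply mul_le_mul_of_nonneg_right (le_max_right _ _) (by positivity)
  intro k v
  have hmap : Mc ^ k = (M ^ k).map (algebraMap ℝ ℂ) := by
    rw [hMc]
    rw [← RingHom.mapMatrix_apply, ← RingHom.mapMatrix_apply, map_pow]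
  have hmv : (Mc ^ k) *ᵥ (fun i => (v i : ℂ)) = fun i => ((((M ^ k) *ᵥ v) i : ℝ) : ℂ) := by
    rw [hmap]; exact mulVec_map_complex _ _
  calc ‖(M ^ k) *ᵥ v‖ = ‖(Mc ^ k) *ᵥ (fun i => (v i : ℂ))‖ := by
        rw [hmv, norm_complexify]
  _ ≤ ‖Mc ^ k‖ * ‖(fun i => (v i : ℂ))‖ := Matrix.linfty_opNorm_mulVec _ _
  _ = ‖Mc ^ k‖ * ‖v‖ := by rw [norm_complexify]
  _ ≤ c * ρ ^ k * ‖v‖ := mul_le_mul_of_nonneg_right (hmat k) (norm_nonneg _)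

end PowBound

lemma mulVec_entry_nonneg {n m' : ℕ} {M : Matrix (Fin n) (Fin m') ℝ}
    (hM : ∀ i j, 0 ≤ M i j) {v : Fin m' → ℝ} (hv : ∀ i, 0 ≤ v i) (i : Fin n) :
    0 ≤ (M *ᵥ v) i := by
  simp only [Matrix.mulVec, dotProduct]
  exact Finset.sum_nonneg fun j _ => mul_nonneg (hM i j) (hv j)

lemma continuous_mulVec' {n : ℕ} (M : Matrix (Fin n) (Fin n) ℝ) :
    Continuous fun v : Fin n → ℝ => M *ᵥ v := by
  have : (fun v : Fin n → ℝ => M *ᵥ v) = (Matrix.mulVecLin M : (Fin n → ℝ) →ₗ[ℝ] _) := rfl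
  rw [this]
  exact LinearMap.continuous_of_finiteDimensional _


section Rec
variable {n : ℕ}

lemma summable_pow_mulVec {M : Matrix (Fin n) (Fin n) ℝ} {c ρ : ℝ} (hρ0 : 0 < ρ) (hρ1 : ρ < 1)
    (hB : ∀ (k : ℕ) (v : Fin n → ℝ), ‖(M ^ k) *ᵥ v‖ ≤ c * ρ ^ k * ‖v‖) (L : Fin n → ℝ) :
    Summable (fun k : ℕ => (M ^ k) *ᵥ L) := by
  apply Summable.of_norm_bounded (g := fun k : ℕ => c * ‖L‖ * ρ ^ k)
    ((summable_geometric_of_lt_one hρ0.le hρ1).mul_left _)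
  intro k
  calc ‖(M ^ k) *ᵥ L‖ ≤ c * ρ ^ k * ‖L‖ := hB k L
  _ = c * ‖L‖ * ρ ^ k := by ring

lemma tendsto_affine_rec {M : Matrix (Fin n) (Fin n) ℝ} {c ρ : ℝ} (hc : 1 ≤ c) (hρ0 : 0 < ρ)
    (hρ1 : ρ < 1)
    (hB : ∀ (k : ℕ) (v : Fin n → ℝ), ‖(M ^ k) *ᵥ v‖ ≤ c * ρ ^ k * ‖v‖)
    (L : Fin n → ℝ) (u : ℕ → Fin n → ℝ) (hu : Tendsto u atTop (nhds L))
    (x : ℕ → Fin n → ℝ) (hx : ∀ t, x (t + 1) = M *ᵥ x t + u t) :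
    Tendsto x atTop (nhds (∑' k : ℕ, (M ^ k) *ᵥ L)) := by
  have hsum := summable_pow_mulVec hρ0 hρ1 hB L
  set xs : Fin n → ℝ := ∑' k : ℕ, (M ^ k) *ᵥ L with hxs
  -- fixed point property
  have hfix : M *ᵥ xs + L = xs := by
    have hT : M *ᵥ xs = ∑' k : ℕ, M *ᵥ ((M ^ k) *ᵥ L) := by
      set T : (Fin n → ℝ) →L[ℝ] (Fin n → ℝ) := LinearMap.toContinuousLinearMap (Matrix.mulVecLin M)
      have hTapp : ∀ w, T w = M *ᵥ w := fun w => rfl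
      rw [← hTapp, ContinuousLinearMap.map_tsum T hsum]
      simp only [hTapp]
    have hshift : ∀ k : ℕ, M *ᵥ ((M ^ k) *ᵥ L) = (M ^ (k + 1)) *ᵥ L := by
      intro k
      rw [Matrix.mulVec_mulVec, ← pow_succ']
    rw [hT]
    simp only [hshift]
    have h0 : xs = (M ^ 0) *ᵥ L + ∑' k : ℕ, (M ^ (k + 1)) *ᵥ L := by
      rw [hxs, Summable.tsum_eq_zero_add hsum]
    rw [h0, pow_zero, Matrix.one_mulVec]
    abel
  set e : ℕ → Fin n → ℝ := fun t => x t - xs with he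
  set v : ℕ → Fin n → ℝ := fun t => u t - L with hv
  have hrec : ∀ t, e (t + 1) = M *ᵥ e t + v t := by
    intro t
    simp only [he, hv, hx t, Matrix.mulVec_sub]
    conv_lhs => rw [← hfix]
    abel
  have hform : ∀ t₀ s, e (t₀ + s) =
      (M ^ s) *ᵥ e t₀ + ∑ i ∈ Finset.range s, (M ^ i) *ᵥ v (t₀ + (s - 1 - i)) := by
    intro t₀ s
    induction s with
    | zero => simp [Matrix.one_mulVec]
    | succ s ih =>
      have h1 : t₀ + (s + 1) = (t₀ + s) + 1 := by omega
      rw [h1, hrec, ih, Matrix.mulVec_add]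
      rw [Finset.sum_range_succ' (fun i => (M ^ i) *ᵥ v (t₀ + (s + 1 - 1 - i))) s]
      have hbig : M *ᵥ ∑ i ∈ Finset.range s, (M ^ i) *ᵥ v (t₀ + (s - 1 - i)) =
          ∑ i ∈ Finset.range s, (M ^ (i + 1)) *ᵥ v (t₀ + (s + 1 - 1 - (i + 1))) := by
        rw [← Matrix.mulVecLin_apply, map_sum]
        simp only [Matrix.mulVecLin_apply]
        apply Finset.sum_congr rfl
        intro i hi
        rw [Matrix.mulVec_mulVec, ← pow_succ']
        have harg : t₀ + (s - 1 - i) = t₀ + (s + 1 - 1 - (i + 1)) := by omega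
        rw [harg]
      rw [hbig, Matrix.mulVec_mulVec, ← pow_succ']
      have : t₀ + (s + 1 - 1 - 0) = t₀ + s := by omega
      rw [this]
      simp only [pow_zero, Matrix.one_mulVec]
      abel
  -- conclusion
  rw [show nhds xs = nhds xs from rfl]
  have key : Tendsto e atTop (nhds 0) := by
    rw [NormedAddCommGroup.tendsto_nhds_zero]
    intro ε hε
    have hc0 : (0:ℝ) < c := lt_of_lt_of_le one_pos hc
    have h1ρ : (0:ℝ) < 1 - ρ := by linarith
    set ε₁ : ℝ := (1 - ρ) * ε / (4 * c) with hε₁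
    have hε₁0 : 0 < ε₁ := by positivity
    have hvt : Tendsto v atTop (nhds 0) := by
      rw [hv, show (0 : Fin n → ℝ) = L - L by simp]
      exact hu.sub tendsto_const_nhds
    rw [NormedAddCommGroup.tendsto_nhds_zero] at hvt
    obtain ⟨t₀, ht₀⟩ := eventually_atTop.mp (hvt ε₁ hε₁0)
    have hgeom : Tendsto (fun s : ℕ => c * ρ ^ s * ‖e t₀‖) atTop (nhds 0) := by
      have := tendsto_pow_atTop_nhds_zero_of_lt_one hρ0.le hρ1
      have h2 : Tendsto (fun s : ℕ => c * ρ ^ s * ‖e t₀‖) atTop (nhds (c * 0 * ‖e t₀‖)) :=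
        (this.const_mul c).mul_const _
      simpa using h2
    rw [NormedAddCommGroup.tendsto_nhds_zero] at hgeom
    obtain ⟨s₀, hs₀⟩ := eventually_atTop.mp (hgeom (ε / 2) (by positivity))
    rw [eventually_atTop]
    refine ⟨t₀ + s₀, fun t ht => ?_⟩
    set s : ℕ := t - t₀ with hs
    have hts : t = t₀ + s := by omega
    have hss : s₀ ≤ s := by omega
    have hbound : ‖e t‖ ≤ c * ρ ^ s * ‖e t₀‖ + c * ε₁ / (1 - ρ) := by
      rw [hts, hform t₀ s]
      calc ‖(M ^ s) *ᵥ e t₀ + ∑ i ∈ Finset.range s, (M ^ i) *ᵥ v (t₀ + (s - 1 - i))‖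
          ≤ ‖(M ^ s) *ᵥ e t₀‖ + ‖∑ i ∈ Finset.range s, (M ^ i) *ᵥ v (t₀ + (s - 1 - i))‖ :=
            norm_add_le _ _
        _ ≤ c * ρ ^ s * ‖e t₀‖ + ∑ i ∈ Finset.range s, ‖(M ^ i) *ᵥ v (t₀ + (s - 1 - i))‖ := by
            gcongr
            · exact hB s (e t₀)
            · exact norm_sum_le _ _
        _ ≤ c * ρ ^ s * ‖e t₀‖ + ∑ i ∈ Finset.range s, c * ρ ^ i * ε₁ := by
            gcongr with i hi
            calc ‖(M ^ i) *ᵥ v (t₀ + (s - 1 - i))‖ ≤ c * ρ ^ i * ‖v (t₀ + (s - 1 - i))‖ :=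
                  hB i _
              _ ≤ c * ρ ^ i * ε₁ := by
                  have := ht₀ (t₀ + (s - 1 - i)) (by omega)
                  have hn : 0 ≤ c * ρ ^ i := by positivity
                  nlinarith [norm_nonneg (v (t₀ + (s - 1 - i)))]
        _ ≤ c * ρ ^ s * ‖e t₀‖ + c * ε₁ / (1 - ρ) := by
            gcongr
            have hsum2 : ∑ i ∈ Finset.range s, c * ρ ^ i * ε₁ =
                (c * ε₁) * ∑ i ∈ Finset.range s, ρ ^ i := by
              rw [Finset.mul_sum]; apply Finset.sum_congr rfl; intro i _; ring
            rw [hsum2]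
            have hle : ∑ i ∈ Finset.range s, ρ ^ i ≤ 1 / (1 - ρ) := by
              have heq : ∑ i ∈ Finset.range s, ρ ^ i = (1 - ρ ^ s) / (1 - ρ) := by
                rw [geom_sum_eq (by linarith : ρ ≠ 1)]
                rw [div_eq_div_iff (by linarith : ρ - 1 ≠ 0) (by linarith : 1 - ρ ≠ 0)]
                ring
              have hρs : 0 ≤ ρ ^ s := by positivity
              rw [heq, div_le_div_iff_of_pos_right h1ρ]
              nlinarith
            calc (c * ε₁) * ∑ i ∈ Finset.range s, ρ ^ i ≤ (c * ε₁) * (1 / (1 - ρ)) := by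
                  apply mul_le_mul_of_nonneg_left hle (by positivity)
              _ = c * ε₁ / (1 - ρ) := by ring
    have hq : c * ε₁ / (1 - ρ) = ε / 4 := by
      rw [hε₁]; field_simp
    have h2 : c * ρ ^ s * ‖e t₀‖ < ε / 2 := by
      have := hs₀ s hss
      calc c * ρ ^ s * ‖e t₀‖ ≤ ‖c * ρ ^ s * ‖e t₀‖‖ := le_abs_self _
        _ < ε / 2 := this
    calc ‖e t‖ ≤ c * ρ ^ s * ‖e t₀‖ + c * ε₁ / (1 - ρ) := hbound
      _ < ε / 2 + ε / 4 := by rw [hq]; linarith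
      _ < ε := by linarith
  have : x = fun t => e t + xs := by funext t; simp [he]
  rw [this]
  have := key.add (tendsto_const_nhds (x := xs) (f := atTop))
  simpa using this
end Rec

/-- **Sufficiency in Theorem 2.** Under Schur stability of the three diagonal blocks,
the six inequalities of Lemma 1, and the three noise inequalities, the cone `X_e` is
invariant under the affine expected error dynamics `f(z) = Gz + d`, and all iterates
started in `X_e` converge to a fixed point `X* ∈ X_e`. -/
theorem noisy_positive_observer_of_ineqs {n m p q r : ℕ}
    (A : Matrix (Fin n) (Fin n) ℝ) (B : Matrix (Fin n) (Fin m) ℝ)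
    (C : Matrix (Fin p) (Fin n) ℝ)
    (Ku Kl : Matrix (Fin m) (Fin n) ℝ) (Lu Ll : Matrix (Fin n) (Fin p) ℝ)
    (E : Matrix (Fin n) (Fin q) ℝ) (F : Matrix (Fin p) (Fin r) ℝ)
    (hE : ∀ i j, 0 ≤ E i j)
    (hS1 : IsSchur (A + B * (Ku + Kl))) (hS2 : IsSchur (A - Lu * C))
    (hS3 : IsSchur (A - Ll * C))
    (h1 : ∀ i j, 0 ≤ (A + B * (Ku + Kl)) i j)
    (h2 : ∀ i j, 0 ≤ (A + B * Ku) i j)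
    (h3 : ∀ i j, 0 ≤ (B * Ku) i j)
    (h4 : ∀ i j, 0 ≤ (A - Lu * C) i j)
    (h5 : ∀ i j, 0 ≤ (A - Ll * C) i j)
    (h6 : ∀ i j, 0 ≤ (B * Ku + Ll * C) i j)
    (h7 : ∀ i, 0 ≤ ((Lu * F) *ᵥ (fun _ => (1 : ℝ)) - E *ᵥ (fun _ => (1 : ℝ))) i)
    (h8 : ∀ i, 0 ≤ (E *ᵥ (fun _ => (1 : ℝ)) - (Ll * F) *ᵥ (fun _ => (1 : ℝ))) i)
    (h9 : ∀ i, 0 ≤ ((Ll * F) *ᵥ (fun _ => (1 : ℝ))) i) :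
    (∀ z ∈ errorCone n, noisyMap A B C Ku Kl Lu Ll E F z ∈ errorCone n) ∧
    ∃ Xstar ∈ errorCone n, ∀ z₀ ∈ errorCone n,
      Tendsto (fun t => (noisyMap A B C Ku Kl Lu Ll E F)^[t] z₀) atTop (nhds Xstar) := by
  set f := noisyMap A B C Ku Kl Lu Ll E F with hf
  set one : Fin q → ℝ := fun _ => (1 : ℝ)
  -- invariance
  have hinv : ∀ z ∈ errorCone n, f z ∈ errorCone n := by
    intro z hz
    obtain ⟨hx, he1, he2, he3⟩ := hz
    have hcomp1 : (f z).1 = (A + B * (Ku + Kl)) *ᵥ z.1 + (B * Ku) *ᵥ z.2.1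
        - (B * Kl) *ᵥ z.2.2 + E *ᵥ (fun _ => (1 : ℝ)) := rfl
    have hcomp2 : (f z).2.1 = (A - Lu * C) *ᵥ z.2.1
        + ((Lu * F) *ᵥ (fun _ => (1 : ℝ)) - E *ᵥ (fun _ => (1 : ℝ))) := rfl
    have hcomp3 : (f z).2.2 = (A - Ll * C) *ᵥ z.2.2
        + (E *ᵥ (fun _ => (1 : ℝ)) - (Ll * F) *ᵥ (fun _ => (1 : ℝ))) := rfl
    have hn2 : ∀ i, 0 ≤ (f z).2.1 i := by
      intro i
      rw [hcomp2]
      have := mulVec_entry_nonneg h4 he1 i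
      have := h7 i
      simp only [Pi.add_apply]
      linarith
    have hn3 : ∀ i, 0 ≤ (f z).2.2 i := by
      intro i
      rw [hcomp3]
      have := mulVec_entry_nonneg h5 he2 i
      have := h8 i
      simp only [Pi.add_apply]
      linarith
    have hmat : A - Ll * C = (A + B * (Ku + Kl)) - (B * Ku + Ll * C) - B * Kl := by
      rw [Matrix.mul_add B Ku Kl]; abel
    have hdiff : (f z).1 - (f z).2.2 = (A + B * (Ku + Kl)) *ᵥ (z.1 - z.2.2)
        + (B * Ku + Ll * C) *ᵥ z.2.2 + (B * Ku) *ᵥ z.2.1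
        + (Ll * F) *ᵥ (fun _ => (1 : ℝ)) := by
      rw [hcomp1, hcomp3, hmat, Matrix.sub_mulVec, Matrix.sub_mulVec, Matrix.mulVec_sub]
      abel
    have hgap : ∀ i, 0 ≤ ((f z).1 i - (f z).2.2 i) := by
      intro i
      have hi : ((f z).1 - (f z).2.2) i = (f z).1 i - (f z).2.2 i := rfl
      rw [← hi, hdiff]
      have t1 := mulVec_entry_nonneg h1 (v := z.1 - z.2.2)
        (fun j => by have := he3 j; simp only [Pi.sub_apply]; linarith) i
      have t2 := mulVec_entry_nonneg h6 he2 i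
      have t3 := mulVec_entry_nonneg h3 he1 i
      have t4 := h9 i
      simp only [Pi.add_apply]
      linarith
    refine ⟨fun i => ?_, hn2, hn3, fun i => by have := hgap i; linarith⟩
    have := hgap i
    have := hn3 i
    linarith
  refine ⟨hinv, ?_⟩
  -- convergence
  obtain ⟨c1, ρ1, hc1, hρ10, hρ11, hB1⟩ := schur_pow_vec_bound _ hS1
  obtain ⟨c2, ρ2, hc2, hρ20, hρ21, hB2⟩ := schur_pow_vec_bound _ hS2
  obtain ⟨c3, ρ3, hc3, hρ30, hρ31, hB3⟩ := schur_pow_vec_bound _ hS3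
  set d2 : Fin n → ℝ := (Lu * F) *ᵥ (fun _ => (1 : ℝ)) - E *ᵥ (fun _ => (1 : ℝ)) with hd2
  set d3 : Fin n → ℝ := E *ᵥ (fun _ => (1 : ℝ)) - (Ll * F) *ᵥ (fun _ => (1 : ℝ)) with hd3
  set xs2 : Fin n → ℝ := ∑' k : ℕ, ((A - Lu * C) ^ k) *ᵥ d2 with hxs2
  set xs3 : Fin n → ℝ := ∑' k : ℕ, ((A - Ll * C) ^ k) *ᵥ d3 with hxs3
  set L1 : Fin n → ℝ := (B * Ku) *ᵥ xs2 - (B * Kl) *ᵥ xs3 + E *ᵥ (fun _ => (1 : ℝ)) with hL1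
  set xs1 : Fin n → ℝ := ∑' k : ℕ, ((A + B * (Ku + Kl)) ^ k) *ᵥ L1 with hxs1
  have htend : ∀ z₀, Tendsto (fun t => f^[t] z₀) atTop (nhds (xs1, xs2, xs3)) := by
    intro z₀
    have ht2 : Tendsto (fun t => (f^[t] z₀).2.1) atTop (nhds xs2) := by
      apply tendsto_affine_rec hc2 hρ20 hρ21 hB2 d2 (fun _ => d2) tendsto_const_nhds
      intro t
      rw [Function.iterate_succ_apply']
      rfl
    have ht3 : Tendsto (fun t => (f^[t] z₀).2.2) atTop (nhds xs3) := by
      apply tendsto_affine_rec hc3 hρ30 hρ31 hB3 d3 (fun _ => d3) tendsto_const_nhds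
      intro t
      rw [Function.iterate_succ_apply']
      rfl
    have ht1 : Tendsto (fun t => (f^[t] z₀).1) atTop (nhds xs1) := by
      apply tendsto_affine_rec hc1 hρ10 hρ11 hB1 L1
        (fun t => (B * Ku) *ᵥ (f^[t] z₀).2.1 - (B * Kl) *ᵥ (f^[t] z₀).2.2
          + E *ᵥ (fun _ => (1 : ℝ)))
      · rw [hL1]
        exact ((((continuous_mulVec' (B * Ku)).tendsto xs2).comp ht2).sub
          (((continuous_mulVec' (B * Kl)).tendsto xs3).comp ht3)).add tendsto_const_nhds
      · intro t
        rw [Function.iterate_succ_apply']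
        show (A + B * (Ku + Kl)) *ᵥ (f^[t] z₀).1 + (B * Ku) *ᵥ (f^[t] z₀).2.1
          - (B * Kl) *ᵥ (f^[t] z₀).2.2 + E *ᵥ (fun _ => (1 : ℝ)) = _
        abel
    have heta : (fun t => f^[t] z₀)
        = fun t => ((f^[t] z₀).1, (f^[t] z₀).2.1, (f^[t] z₀).2.2) := rfl
    rw [heta]
    exact ht1.prodMk_nhds (ht2.prodMk_nhds ht3)
  have hzero : ∀ t : ℕ, f^[t] (0, 0, 0) ∈ errorCone n := by
    intro t
    induction t with
    | zero => exact ⟨fun i => le_refl 0, fun i => le_refl 0, fun i => le_refl 0,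
        fun i => le_refl 0⟩
    | succ t ih =>
      rw [Function.iterate_succ_apply']
      exact hinv _ ih
  have hmem : (xs1, xs2, xs3) ∈ errorCone n := by
    have h0 := htend (0, 0, 0)
    have hp1 : ∀ i : Fin n, Tendsto (fun t => (f^[t] ((0,0,0) :
        (Fin n → ℝ) × (Fin n → ℝ) × (Fin n → ℝ))).1 i) atTop (nhds (xs1 i)) :=
      fun i => (((continuous_apply i).comp continuous_fst).tendsto _).comp h0
    have hp2 : ∀ i : Fin n, Tendsto (fun t => (f^[t] ((0,0,0) :
        (Fin n → ℝ) × (Fin n → ℝ) × (Fin n → ℝ))).2.1 i) atTop (nhds (xs2 i)) :=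
      fun i => (((continuous_apply i).comp (continuous_fst.comp continuous_snd)).tendsto
        _).comp h0
    have hp3 : ∀ i : Fin n, Tendsto (fun t => (f^[t] ((0,0,0) :
        (Fin n → ℝ) × (Fin n → ℝ) × (Fin n → ℝ))).2.2 i) atTop (nhds (xs3 i)) :=
      fun i => (((continuous_apply i).comp (continuous_snd.comp continuous_snd)).tendsto
        _).comp h0
    refine ⟨fun i => ge_of_tendsto' (hp1 i) (fun t => (hzero t).1 i),
      fun i => ge_of_tendsto' (hp2 i) (fun t => (hzero t).2.1 i),
      fun i => ge_of_tendsto' (hp3 i) (fun t => (hzero t).2.2.1 i),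
      fun i => le_of_tendsto_of_tendsto' (hp3 i) (hp1 i) (fun t => (hzero t).2.2.2 i)⟩
  exact ⟨(xs1, xs2, xs3), hmem, fun z₀ _ => htend z₀⟩
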